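/- Under the hypotheses of the moment recursion, the partial moments M_{ℓ,r} = ∫_{r/B}^{(r+1)/B} F(z) z^{ℓ−1} dz for 0 ≤ r < B satisfy M_{ℓ,r}·J = Σ_{b<r} ((r+1)^ℓ − r^ℓ)/(ℓ·B^ℓ) · A_b·V + B^{−ℓ}·Σ_{k=1}^{ℓ} binomial(ℓ−1, k−1)·r^{ℓ−k}·A_r·M_k, and since J is invertible, the partial moments are determined by the full moments M_1,...,M_ℓ. -/

import Mathlib

open Matrix intervalIntegral

/-- The `ν×ν` upper-triangular Jordan cell with eigenvalue `lam`. -/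
def jordanCell (ν : ℕ) (lam : ℂ) : Matrix (Fin ν) (Fin ν) ℂ :=
  Matrix.of fun i j => if i = j then lam else if (j : ℕ) = (i : ℕ) + 1 then 1 else 0


private lemma sum_Icc_one_succ (n : ℕ) (g : ℕ → ℂ) :
    ∑ k ∈ Finset.Icc 1 (n+1), g k = ∑ t ∈ Finset.range (n+1), g (t+1) := by
  induction n with
  | zero => simp
  | succ m ih => rw [Finset.sum_Icc_succ_top (by omega), Finset.sum_range_succ, ih]

/-- the partial moments `M_{ℓ,r} = ∫_{r/B}^{(r+1)/B} F(z) z^{ℓ−1} dz`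
satisfy
`M_{ℓ,r}·J = Σ_{b<r} ((r+1)^ℓ−r^ℓ)/(ℓB^ℓ) A_b V + B^{−ℓ} Σ_{k=1}^{ℓ} C(ℓ−1,k−1) r^{ℓ−k} A_r M_k`;
since `J` is invertible, the partial moments are determined by the full
moments. -/
theorem partial_moments_recursion
    (B d ν : ℕ) (hB : 2 ≤ B) (hν : 0 < ν)
    (A : ℕ → Matrix (Fin d) (Fin d) ℂ)
    (Q : Matrix (Fin d) (Fin d) ℂ) (hQ : Q = ∑ b ∈ Finset.range B, A b)
    (lam : ℂ) (hlam : lam ≠ 0)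
    (V : Matrix (Fin d) (Fin ν) ℂ) (hQV : Q * V = V * jordanCell ν lam)
    (F : ℝ → Matrix (Fin d) (Fin ν) ℂ)
    (hFc : Continuous F) (hF0 : ∀ x ≤ (0 : ℝ), F x = 0)
    (hF1 : ∀ x ≥ (1 : ℝ), F x = V)
    (hdil : ∀ x : ℝ, F x * jordanCell ν lam =
      ∑ b ∈ Finset.range B, A b * F ((B : ℝ) * x - b))
    (M : ℕ → Matrix (Fin d) (Fin ν) ℂ)
    (hM : ∀ ℓ, M ℓ = Matrix.of
      fun i j => ∫ z in (0 : ℝ)..1, F z i j * (z : ℂ) ^ (ℓ - 1))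
    (Mp : ℕ → ℕ → Matrix (Fin d) (Fin ν) ℂ)
    (hMp : ∀ ℓ r, Mp ℓ r = Matrix.of
      fun i j => ∫ z in ((r : ℝ)/B)..(((r : ℝ) + 1)/B), F z i j * (z : ℂ) ^ (ℓ - 1)) :
    (∀ ℓ : ℕ, 1 ≤ ℓ → ∀ r < B,
      Mp ℓ r * jordanCell ν lam =
        (∑ b ∈ Finset.range r,
          ((((r : ℂ) + 1) ^ ℓ - (r : ℂ) ^ ℓ) / ((ℓ : ℂ) * (B : ℂ) ^ ℓ)) • (A b * V))
        + ((1 : ℂ) / (B : ℂ) ^ ℓ) •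
            ∑ k ∈ Finset.Icc 1 ℓ,
              ((((ℓ - 1).choose (k - 1) : ℂ)) * (r : ℂ) ^ (ℓ - k)) • (A r * M k)) ∧
    IsUnit (jordanCell ν lam).det ∧
    (∀ ℓ : ℕ, 1 ≤ ℓ → ∀ r < B, ∀ N : Matrix (Fin d) (Fin ν) ℂ,
      N * jordanCell ν lam = Mp ℓ r * jordanCell ν lam → N = Mp ℓ r) := by

  have hdet : (jordanCell ν lam).det = lam ^ ν := by
    rw [Matrix.det_of_upperTriangular]
    · simp [jordanCell]
    · intro i j hji
      simp only [jordanCell, Matrix.of_apply, id] at *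
      rw [if_neg (by omega : ¬ i = j), if_neg (by omega)]
  have hunit : IsUnit (jordanCell ν lam).det := by
    rw [hdet]; exact isUnit_iff_ne_zero.mpr (pow_ne_zero _ hlam)
  refine ⟨?_, hunit, ?_⟩
  · intro ℓ hℓ r hr
    obtain ⟨n, rfl⟩ : ∃ n, ℓ = n + 1 := ⟨ℓ - 1, by omega⟩
    have hB0 : (0:ℝ) < (B:ℝ) := by exact_mod_cast (by omega : 0 < B)
    have hBne : (B:ℝ) ≠ 0 := ne_of_gt hB0
    have hBneC : (B:ℂ) ≠ 0 := by exact_mod_cast (Nat.cast_ne_zero (R := ℂ)).mpr (by omega)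
    have hFe : ∀ (x : Fin d) (c : Fin ν), Continuous fun z : ℝ => F z x c :=
      fun x c => hFc.matrix_elem x c
    have cpow : ∀ m : ℕ, Continuous fun z : ℝ => (z:ℂ) ^ m :=
      fun m => Complex.continuous_ofReal.pow m
    have hAF : Continuous fun z : ℝ => A r * F ((B:ℝ) * z - r) :=
      continuous_const.matrix_mul (hFc.comp (by continuity))
    ext i j
    rw [hMp, Matrix.mul_apply]
    simp only [Matrix.of_apply, Nat.add_sub_cancel]
    set J := jordanCell ν lam with hJ
    set lo : ℝ := (r:ℝ)/B with hlo
    set hi : ℝ := ((r:ℝ)+1)/B with hhi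
    have hab : lo ≤ hi := by
      rw [hlo, hhi, div_le_div_iff₀ hB0 hB0]; nlinarith
    have step1 : ∑ c, (∫ z in lo..hi, F z i c * (z:ℂ)^n) * J c j
        = ∫ z in lo..hi, (F z * J) i j * (z:ℂ)^n := by
      calc ∑ c, (∫ z in lo..hi, F z i c * (z:ℂ)^n) * J c j
          = ∑ c, ∫ z in lo..hi, F z i c * (z:ℂ)^n * J c j := by
            exact Finset.sum_congr rfl fun c _ => (intervalIntegral.integral_mul_const _ _).symm
        _ = ∫ z in lo..hi, ∑ c, F z i c * (z:ℂ)^n * J c j := by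
            rw [← intervalIntegral.integral_finset_sum]
            intro c _
            exact (((hFe i c).mul (cpow n)).mul continuous_const).intervalIntegrable _ _
        _ = ∫ z in lo..hi, (F z * J) i j * (z:ℂ)^n := by
            refine intervalIntegral.integral_congr fun z _ => ?_
            rw [Matrix.mul_apply, Finset.sum_mul]
            exact Finset.sum_congr rfl fun c _ => by ring
    rw [step1]
    -- use the dilation equation and localize
    have step2 : ∫ z in lo..hi, (F z * J) i j * (z:ℂ)^n
        = ∫ z in lo..hi, ((∑ b ∈ Finset.range r, (A b * V) i j) * (z:ℂ)^n
            + (A r * F ((B:ℝ) * z - r)) i j * (z:ℂ)^n) := by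
      refine intervalIntegral.integral_congr fun z hz => ?_
      rw [Set.uIcc_of_le hab] at hz
      obtain ⟨hz1, hz2⟩ := hz
      have hzB1 : (r:ℝ) ≤ (B:ℝ) * z := by
        rw [hlo, div_le_iff₀ hB0] at hz1; linarith
      have hzB2 : (B:ℝ) * z ≤ (r:ℝ) + 1 := by
        rw [hhi, le_div_iff₀ hB0] at hz2; linarith
      rw [hdil z, Matrix.sum_apply]
      have hsplit : Finset.range B = Finset.range (r+1) ∪ Finset.Ico (r+1) B := by
        rw [Finset.range_eq_Ico, Finset.range_eq_Ico, Finset.Ico_union_Ico_eq_Ico (Nat.zero_le _) (by omega)]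
      rw [hsplit, Finset.sum_union (by
        rw [Finset.range_eq_Ico]; exact Finset.Ico_disjoint_Ico_consecutive 0 (r+1) B)]
      have hzero : ∑ b ∈ Finset.Ico (r+1) B, (A b * F ((B:ℝ) * z - b)) i j = 0 := by
        refine Finset.sum_eq_zero fun b hb => ?_
        have hb' : r + 1 ≤ b := (Finset.mem_Ico.mp hb).1
        have : F ((B:ℝ) * z - b) = 0 := by
          apply hF0
          have : ((r:ℝ) + 1) ≤ (b:ℝ) := by exact_mod_cast hb'
          linarith
        rw [this, Matrix.mul_zero, Matrix.zero_apply]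
      rw [hzero, add_zero, Finset.sum_range_succ]
      have hV : ∀ b ∈ Finset.range r, (A b * F ((B:ℝ) * z - b)) i j = (A b * V) i j := by
        intro b hb
        have hb' : b < r := Finset.mem_range.mp hb
        have : F ((B:ℝ) * z - b) = V := by
          apply hF1
          have : (b:ℝ) + 1 ≤ (r:ℝ) := by exact_mod_cast hb'
          linarith
        rw [this]
      rw [Finset.sum_congr rfl hV, add_mul, Finset.sum_mul]
    rw [step2]
    have hint1 : (∫ z in lo..hi, (z:ℂ)^n)
        = ((((r:ℂ)+1)^(n+1) - (r:ℂ)^(n+1)) / (((n:ℂ)+1) * (B:ℂ)^(n+1))) := by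
      have : (fun z : ℝ => (z:ℂ)^n) = fun z : ℝ => ((z^n : ℝ) : ℂ) := by
        funext z; push_cast; ring
      rw [this, intervalIntegral.integral_ofReal, integral_pow]
      rw [hlo, hhi]
      push_cast
      rw [div_pow, div_pow]
      field_simp
    have hcont2 : Continuous fun z : ℝ => (A r * F ((B:ℝ) * z - r)) i j * (z:ℂ)^n :=
      (hAF.matrix_elem i j).mul (cpow n)
    rw [intervalIntegral.integral_add (f := fun z : ℝ => (∑ b ∈ Finset.range r, (A b * V) i j) * (z:ℂ)^n)
      ((continuous_const.mul (cpow n)).intervalIntegrable _ _)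
      (hcont2.intervalIntegrable _ _),
      intervalIntegral.integral_const_mul, hint1]
    -- substitution in the second integral
    have hsub : (∫ z in lo..hi, (A r * F ((B:ℝ) * z - r)) i j * (z:ℂ)^n)
        = (B:ℝ)⁻¹ • ∫ y in (0:ℝ)..1, (A r * F y) i j * ((((y + r)/B : ℝ)):ℂ)^n := by
      have key := intervalIntegral.integral_comp_mul_sub (a := lo) (b := hi)
        (fun y : ℝ => (A r * F y) i j * ((((y + r)/B : ℝ)):ℂ)^n) hBne (r:ℝ)
      have e0 : (B:ℝ) * lo - r = 0 := by rw [hlo]; field_simp; ring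
      have e1 : (B:ℝ) * hi - r = 1 := by rw [hhi]; field_simp; ring
      rw [e0, e1] at key
      rw [← key]
      refine intervalIntegral.integral_congr fun z _ => ?_
      have h1 : ((B:ℝ) * z - r + r)/B = z := by field_simp; ring
      simp only [h1]
    rw [hsub]
    -- expand the binomial
    have hexp : ∀ y : ℝ, (A r * F y) i j * ((((y + r)/B : ℝ)):ℂ)^n
        = ∑ t ∈ Finset.range (n+1),
            ((n.choose t : ℂ) * (r:ℂ)^(n - t) / (B:ℂ)^n) * ((A r * F y) i j * (y:ℂ)^t) := by
      intro y
      push_cast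
      rw [div_pow, add_pow, Finset.sum_div, Finset.mul_sum]
      exact Finset.sum_congr rfl fun t _ => by ring
    have hAM : ∀ t : ℕ, (∫ y in (0:ℝ)..1, (A r * F y) i j * (y:ℂ)^t)
        = (A r * M (t+1)) i j := by
      intro t
      rw [hM, Matrix.mul_apply]
      simp only [Matrix.of_apply, Nat.add_sub_cancel]
      calc (∫ y in (0:ℝ)..1, (A r * F y) i j * (y:ℂ)^t)
          = ∫ y in (0:ℝ)..1, ∑ c, A r i c * (F y c j * (y:ℂ)^t) := by
            refine intervalIntegral.integral_congr fun y _ => ?_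
            rw [Matrix.mul_apply, Finset.sum_mul]
            exact Finset.sum_congr rfl fun c _ => by ring
        _ = ∑ c, ∫ y in (0:ℝ)..1, A r i c * (F y c j * (y:ℂ)^t) := by
            refine intervalIntegral.integral_finset_sum fun c _ => ?_
            exact (continuous_const.mul ((hFe c j).mul (cpow t))).intervalIntegrable _ _
        _ = ∑ c, A r i c * ∫ y in (0:ℝ)..1, F y c j * (y:ℂ)^t :=
            Finset.sum_congr rfl fun c _ => intervalIntegral.integral_const_mul _ _
    have hint2 : (∫ y in (0:ℝ)..1, (A r * F y) i j * ((((y + r)/B : ℝ)):ℂ)^n)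
        = ∑ t ∈ Finset.range (n+1),
            ((n.choose t : ℂ) * (r:ℂ)^(n - t) / (B:ℂ)^n) * (A r * M (t+1)) i j := by
      calc (∫ y in (0:ℝ)..1, (A r * F y) i j * ((((y + r)/B : ℝ)):ℂ)^n)
          = ∫ y in (0:ℝ)..1, ∑ t ∈ Finset.range (n+1),
              ((n.choose t : ℂ) * (r:ℂ)^(n - t) / (B:ℂ)^n) * ((A r * F y) i j * (y:ℂ)^t) := by
            exact intervalIntegral.integral_congr fun y _ => hexp y
        _ = ∑ t ∈ Finset.range (n+1), ∫ y in (0:ℝ)..1,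
              ((n.choose t : ℂ) * (r:ℂ)^(n - t) / (B:ℂ)^n) * ((A r * F y) i j * (y:ℂ)^t) := by
            refine intervalIntegral.integral_finset_sum fun t _ => ?_
            exact (continuous_const.mul (((continuous_const.matrix_mul hFc).matrix_elem i j).mul (cpow t))).intervalIntegrable _ _
        _ = ∑ t ∈ Finset.range (n+1),
              ((n.choose t : ℂ) * (r:ℂ)^(n - t) / (B:ℂ)^n) * (A r * M (t+1)) i j := by
            refine Finset.sum_congr rfl fun t _ => ?_
            rw [intervalIntegral.integral_const_mul, hAM t]
    rw [hint2]
    -- assemble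
    simp only [Matrix.add_apply, Matrix.sum_apply, Matrix.smul_apply, smul_eq_mul,
      Complex.real_smul, Complex.ofReal_inv, Complex.ofReal_natCast]
    rw [sum_Icc_one_succ n (fun k => ((n.choose (k-1) : ℂ) * (r:ℂ)^(n+1-k)) * (A r * M k) i j)]
    rw [Finset.mul_sum, Finset.mul_sum, Finset.sum_mul]
    congr 1
    · exact Finset.sum_congr rfl fun b _ => by push_cast; ring
    · refine Finset.sum_congr rfl fun t ht => ?_
      have : (n + 1) - (t + 1) = n - t := by omega
      rw [this]
      simp only [Nat.add_sub_cancel]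
      rw [pow_succ]
      ring
  · intro ℓ hℓ r hr N hN
    have h2 := congrArg (fun X => X * (jordanCell ν lam)⁻¹) hN
    simpa [Matrix.mul_assoc, Matrix.mul_nonsing_inv _ hunit, Matrix.mul_one] using h2
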